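/- arXiv:2509.09240 — 5 statements merged into one kernel-verified Lean document; each statement's English description precedes it below -/
import Mathlib

section
/- Let n ≥ 1 and let f : 𝕋 → M_n(ℂ). Suppose (f₋, f₊) and (g₋, g₊) are two right canonical factorization data for f. Then there exists an invertible matrix C ∈ GL(n, ℂ) such that g₊(z) = C · f₊(z) and g₋(z) = f₋(z) · C⁻¹ for all z in the closed unit disk 𝔻̄. -/
open Complex Matrix

/-- The closed unit disk in `ℂ`. -/
def closedDisk : Set ℂ := {z : ℂ | ‖z‖ ≤ 1}

/-- The open unit disk in `ℂ`. -/
def openDisk : Set ℂ := {z : ℂ | ‖z‖ < 1}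

/-- A right canonical factorization datum for `f : 𝕋 → Mₙ(ℂ)`: a pair `(fm, fp)` of maps on the
closed unit disk, continuous there, holomorphic on the open disk, taking invertible values, with
`f z = fm z̄ * fp z` on the unit circle. -/
structure RightCanonicalFactorizationDatum (n : ℕ)
    (f fm fp : ℂ → Matrix (Fin n) (Fin n) ℂ) : Prop where
  cont_m : ContinuousOn fm closedDisk
  cont_p : ContinuousOn fp closedDisk
  hol_m : ∀ i j, DifferentiableOn ℂ (fun z => fm z i j) openDisk
  hol_p : ∀ i j, DifferentiableOn ℂ (fun z => fp z i j) openDisk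
  unit_m : ∀ z ∈ closedDisk, IsUnit (fm z)
  unit_p : ∀ z ∈ closedDisk, IsUnit (fp z)
  factor : ∀ z : ℂ, ‖z‖ = 1 → f z = fm (starRingEnd ℂ z) * fp z

section Aux

variable {n : ℕ} {s : Set ℂ}

lemma aux_contOn_entry {M : ℂ → Matrix (Fin n) (Fin n) ℂ} (h : ContinuousOn M s) (i j : Fin n) :
    ContinuousOn (fun z => M z i j) s := by
  have : Continuous (fun A : Matrix (Fin n) (Fin n) ℂ => A i j) :=
    (continuous_apply j).comp (continuous_apply i)
  exact this.comp_continuousOn h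

lemma aux_diffOn_det {M : ℂ → Matrix (Fin n) (Fin n) ℂ}
    (h : ∀ i j, DifferentiableOn ℂ (fun z => M z i j) s) :
    DifferentiableOn ℂ (fun z => (M z).det) s := by
  simp only [Matrix.det_apply']
  exact DifferentiableOn.fun_sum fun σ _ =>
    DifferentiableOn.const_mul (DifferentiableOn.fun_finset_prod fun i _ => h (σ i) i) _

lemma aux_contOn_det {M : ℂ → Matrix (Fin n) (Fin n) ℂ}
    (h : ∀ i j, ContinuousOn (fun z => M z i j) s) :
    ContinuousOn (fun z => (M z).det) s := by
  simp only [Matrix.det_apply']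
  exact continuousOn_finset_sum _ fun σ _ =>
    continuousOn_const.mul (continuousOn_finset_prod _ fun i _ => h (σ i) i)

lemma aux_diffOn_inv_entry {M : ℂ → Matrix (Fin n) (Fin n) ℂ}
    (h : ∀ i j, DifferentiableOn ℂ (fun z => M z i j) s)
    (hu : ∀ z ∈ s, IsUnit (M z)) (i j : Fin n) :
    DifferentiableOn ℂ (fun z => (M z)⁻¹ i j) s := by
  have hdet : DifferentiableOn ℂ (fun z => (M z).det) s := aux_diffOn_det h
  have hadj : DifferentiableOn ℂ (fun z => (M z).adjugate i j) s := by
    simp only [Matrix.adjugate_apply]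
    refine aux_diffOn_det fun a b => ?_
    rcases eq_or_ne a j with rfl | hab
    · simp only [Matrix.updateRow_apply, if_pos rfl]
      exact differentiableOn_const _
    · simp only [Matrix.updateRow_apply, if_neg hab]
      exact h a b
  refine DifferentiableOn.congr
    ((hdet.inv fun z hz => ((Matrix.isUnit_iff_isUnit_det _).mp (hu z hz)).ne_zero).mul hadj)
    fun z hz => ?_
  rw [Matrix.inv_def, Ring.inverse_eq_inv']
  simp [Matrix.smul_apply, smul_eq_mul]

lemma aux_contOn_inv_entry {M : ℂ → Matrix (Fin n) (Fin n) ℂ}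
    (h : ∀ i j, ContinuousOn (fun z => M z i j) s)
    (hu : ∀ z ∈ s, IsUnit (M z)) (i j : Fin n) :
    ContinuousOn (fun z => (M z)⁻¹ i j) s := by
  have hdet : ContinuousOn (fun z => (M z).det) s := aux_contOn_det h
  have hadj : ContinuousOn (fun z => (M z).adjugate i j) s := by
    simp only [Matrix.adjugate_apply]
    refine aux_contOn_det fun a b => ?_
    rcases eq_or_ne a j with rfl | hab
    · simp only [Matrix.updateRow_apply, if_pos rfl]
      exact continuousOn_const
    · simp only [Matrix.updateRow_apply, if_neg hab]
      exact h a b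
  refine ContinuousOn.congr
    ((hdet.inv₀ fun z hz => ((Matrix.isUnit_iff_isUnit_det _).mp (hu z hz)).ne_zero).mul hadj)
    fun z hz => ?_
  rw [Matrix.inv_def, Ring.inverse_eq_inv']
  simp [Matrix.smul_apply, smul_eq_mul]

open Metric in
/-- Key analytic lemma: if `φ` and `ψ` are continuous on the closed unit disk, holomorphic in its
interior, and `φ z = ψ (conj z)` on the unit circle, then `φ` is constant on the closed disk. -/
lemma aux_reflect_const {φ ψ : ℂ → ℂ}
    (hφc : ContinuousOn φ (closedBall 0 1)) (hφd : DifferentiableOn ℂ φ (ball 0 1))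
    (hψc : ContinuousOn ψ (closedBall 0 1)) (hψd : DifferentiableOn ℂ ψ (ball 0 1))
    (hrel : ∀ z : ℂ, ‖z‖ = 1 → φ z = ψ (starRingEnd ℂ z)) :
    ∀ z ∈ closedBall (0:ℂ) 1, φ z = φ 0 := by
  have key : ∀ w ∈ ball (0:ℂ) 1, φ w = φ 0 := by
    intro w hw
    have hwn : ‖w‖ < 1 := by simpa [mem_ball_zero_iff] using hw
    have hφat : ∀ x ∈ ball (0:ℂ) 1 \ (∅ : Set ℂ), DifferentiableAt ℂ φ x := fun x hx =>
      hφd.differentiableAt (isOpen_ball.mem_nhds hx.1)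
    have h1 := Complex.circleIntegral_sub_inv_smul_of_differentiable_on_off_countable
      Set.countable_empty hw hφc hφat
    have h0 := Complex.circleIntegral_sub_inv_smul_of_differentiable_on_off_countable
      Set.countable_empty (mem_ball_self one_pos) hφc hφat
    have hsne : ∀ z ∈ sphere (0:ℂ) 1, z - w ≠ 0 := by
      intro z hz
      have hz1 : ‖z‖ = 1 := by simpa [mem_sphere_zero_iff_norm] using hz
      intro h
      rw [sub_eq_zero] at h
      rw [h] at hz1
      exact absurd hz1 hwn.ne
    have hs0 : ∀ z ∈ sphere (0:ℂ) 1, z - 0 ≠ 0 := by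
      intro z hz
      have hz1 : ‖z‖ = 1 := by simpa [mem_sphere_zero_iff_norm] using hz
      simp only [sub_zero]
      intro h; rw [h] at hz1; simp at hz1
    have hi1 : CircleIntegrable (fun z => (z - w)⁻¹ • φ z) 0 1 :=
      (((continuousOn_id.sub continuousOn_const).inv₀ hsne).smul
        (hφc.mono sphere_subset_closedBall)).circleIntegrable zero_le_one
    have hi0 : CircleIntegrable (fun z => (z - 0)⁻¹ • φ z) 0 1 :=
      (((continuousOn_id.sub continuousOn_const).inv₀ hs0).smul
        (hφc.mono sphere_subset_closedBall)).circleIntegrable zero_le_one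
    have hsub : (∮ z in C(0,1), ((z - w)⁻¹ • φ z - (z - 0)⁻¹ • φ z))
        = (2 * (Real.pi : ℂ) * I) • φ w - (2 * (Real.pi : ℂ) * I) • φ 0 := by
      rw [circleIntegral.integral_sub hi1 hi0, h1, h0]
    have hne : ∀ u : ℂ, ‖u‖ ≤ 1 → 1 - w * u ≠ 0 := by
      intro u hu h
      have h2 : ‖w * u‖ < 1 := by
        calc ‖w * u‖ = ‖w‖ * ‖u‖ := norm_mul _ _
          _ ≤ ‖w‖ * 1 := mul_le_mul_of_nonneg_left hu (norm_nonneg _)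
          _ < 1 := by rw [mul_one]; exact hwn
      rw [sub_eq_zero] at h
      rw [← h] at h2
      simp at h2
    have hJ : (∮ u in C(0,1), (w * (1 - w * u)⁻¹) • ψ u) = 0 := by
      refine Complex.circleIntegral_eq_zero_of_differentiable_on_off_countable zero_le_one
        Set.countable_empty ?_ ?_
      · exact (continuousOn_const.mul ((continuousOn_const.sub
          (continuousOn_const.mul continuousOn_id)).inv₀ fun u hu =>
            hne u (by simpa [mem_closedBall_zero_iff] using hu))).smul hψc
      · intro x hx
        have hx1 : ‖x‖ < 1 := by simpa [mem_ball_zero_iff] using hx.1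
        have hd : DifferentiableAt ℂ (fun u : ℂ => w * (1 - w * u)⁻¹) x := by
          fun_prop (disch := exact hne x hx1.le)
        exact hd.fun_smul (hψd.differentiableAt (isOpen_ball.mem_nhds hx.1))
    -- the pointwise substitution identity θ ↦ -θ
    have hKG : ∀ θ : ℝ,
        deriv (circleMap 0 1) θ • ((circleMap 0 1 θ - w)⁻¹ • φ (circleMap 0 1 θ)
          - (circleMap 0 1 θ - 0)⁻¹ • φ (circleMap 0 1 θ))
        = (fun t : ℝ => deriv (circleMap 0 1) t •
            ((w * (1 - w * circleMap 0 1 t)⁻¹) • ψ (circleMap 0 1 t))) (-θ) := by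
      intro θ
      simp only [deriv_circleMap]
      set z := circleMap 0 1 θ with hzdef
      have hz1 : ‖z‖ = 1 := by
        have := norm_circleMap_zero 1 θ
        rw [hzdef]
        simpa using this
      have hconj : circleMap 0 1 (-θ) = starRingEnd ℂ z := by
        rw [hzdef, circleMap_zero, circleMap_zero]
        simp only [one_mul, ← Complex.exp_conj, _root_.map_mul, Complex.conj_I,
          Complex.conj_ofReal]
        congr 1
        push_cast
        ring
      have hz0 : z ≠ 0 := by intro h; rw [h] at hz1; simp at hz1
      have hzw : z - w ≠ 0 := by
        intro h; rw [sub_eq_zero] at h; rw [h] at hz1; exact absurd hz1 hwn.ne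
      have hcz : starRingEnd ℂ z * z = 1 := by
        rw [mul_comm, Complex.mul_conj]
        norm_cast
        rw [Complex.normSq_eq_norm_sq]
        simp [hz1]
      have hc : starRingEnd ℂ z = z⁻¹ := eq_inv_of_mul_eq_one_left hcz
      have h1wc : 1 - w * z⁻¹ ≠ 0 := by
        rw [← hc]
        exact hne _ (by simp [hz1])
      simp only [hconj, hrel z hz1, smul_eq_mul, hc]
      field_simp
      ring
    have hLHS : (∮ z in C(0,1), ((z - w)⁻¹ • φ z - (z - 0)⁻¹ • φ z))
        = ∮ u in C(0,1), (w * (1 - w * u)⁻¹) • ψ u := by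
      rw [circleIntegral, circleIntegral]
      set G : ℝ → ℂ := fun t => deriv (circleMap 0 1) t •
        ((w * (1 - w * circleMap 0 1 t)⁻¹) • ψ (circleMap 0 1 t)) with hGdef
      have hper : Function.Periodic G (2 * Real.pi) := by
        intro t
        simp only [hGdef, deriv_circleMap]
        rw [periodic_circleMap 0 1 t]
      calc (∫ θ in (0:ℝ)..2 * Real.pi, deriv (circleMap 0 1) θ •
              ((circleMap 0 1 θ - w)⁻¹ • φ (circleMap 0 1 θ)
                - (circleMap 0 1 θ - 0)⁻¹ • φ (circleMap 0 1 θ)))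
          = ∫ θ in (0:ℝ)..2 * Real.pi, G (-θ) := by
            refine intervalIntegral.integral_congr fun θ _ => ?_
            exact hKG θ
        _ = ∫ θ in -(2 * Real.pi)..(-(0:ℝ)), G θ := intervalIntegral.integral_comp_neg G
        _ = ∫ θ in (0:ℝ)..2 * Real.pi, G θ := by
            have := hper.intervalIntegral_add_eq (-(2 * Real.pi)) 0
            simpa using this
    have h2πI : (2 * (Real.pi : ℂ) * I) ≠ 0 :=
      mul_ne_zero (mul_ne_zero two_ne_zero (Complex.ofReal_ne_zero.mpr Real.pi_ne_zero))
        Complex.I_ne_zero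
    have : (2 * (Real.pi : ℂ) * I) • φ w - (2 * (Real.pi : ℂ) * I) • φ 0 = 0 := by
      rw [← hsub, hLHS, hJ]
    have h5 : (2 * (Real.pi : ℂ) * I) • φ w = (2 * (Real.pi : ℂ) * I) • φ 0 :=
      sub_eq_zero.mp this
    exact smul_right_injective ℂ h2πI h5
  intro z hz
  exact Set.EqOn.of_subset_closure key hφc continuousOn_const ball_subset_closedBall
    (by rw [closure_ball (0:ℂ) one_ne_zero]) hz

end Aux

/-- Two right canonical factorization data of the same symbol differ by a constant invertible
matrix. -/
theorem right_canonical_factorization_unique_up_to_constant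
    {n : ℕ} (hn : 1 ≤ n) (f fm fp gm gp : ℂ → Matrix (Fin n) (Fin n) ℂ)
    (hf : RightCanonicalFactorizationDatum n f fm fp)
    (hg : RightCanonicalFactorizationDatum n f gm gp) :
    ∃ C : Matrix (Fin n) (Fin n) ℂ, IsUnit C ∧
      ∀ z ∈ closedDisk, gp z = C * fp z ∧ gm z = fm z * C⁻¹ := by
  have hcd : closedDisk = Metric.closedBall (0:ℂ) 1 := by
    ext z; simp [closedDisk, mem_closedBall_zero_iff]
  have hod : openDisk = Metric.ball (0:ℂ) 1 := by
    ext z; simp [openDisk, mem_ball_zero_iff]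
  have hsub : openDisk ⊆ closedDisk := fun z hz => show ‖z‖ ≤ 1 from le_of_lt hz
  set Φ : ℂ → Matrix (Fin n) (Fin n) ℂ := fun z => gp z * (fp z)⁻¹ with hΦdef
  set Ψ : ℂ → Matrix (Fin n) (Fin n) ℂ := fun z => (gm z)⁻¹ * fm z with hΨdef
  have hΦc : ∀ i j, ContinuousOn (fun z => Φ z i j) closedDisk := by
    intro i j
    simp only [hΦdef, Matrix.mul_apply]
    exact continuousOn_finset_sum _ fun k _ =>
      (aux_contOn_entry hg.cont_p i k).mul
        (aux_contOn_inv_entry (aux_contOn_entry hf.cont_p) hf.unit_p k j)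
  have hΨc : ∀ i j, ContinuousOn (fun z => Ψ z i j) closedDisk := by
    intro i j
    simp only [hΨdef, Matrix.mul_apply]
    exact continuousOn_finset_sum _ fun k _ =>
      (aux_contOn_inv_entry (aux_contOn_entry hg.cont_m) hg.unit_m i k).mul
        (aux_contOn_entry hf.cont_m k j)
  have hΦd : ∀ i j, DifferentiableOn ℂ (fun z => Φ z i j) openDisk := by
    intro i j
    simp only [hΦdef, Matrix.mul_apply]
    exact DifferentiableOn.fun_sum fun k _ =>
      (hg.hol_p i k).fun_mul
        (aux_diffOn_inv_entry hf.hol_p (fun z hz => hf.unit_p z (hsub hz)) k j)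
  have hΨd : ∀ i j, DifferentiableOn ℂ (fun z => Ψ z i j) openDisk := by
    intro i j
    simp only [hΨdef, Matrix.mul_apply]
    exact DifferentiableOn.fun_sum fun k _ =>
      (aux_diffOn_inv_entry hg.hol_m (fun z hz => hg.unit_m z (hsub hz)) i k).fun_mul
        (hf.hol_m k j)
  -- boundary relation
  have hbd : ∀ z : ℂ, ‖z‖ = 1 → Φ z = Ψ (starRingEnd ℂ z) := by
    intro z hz1
    have hzc : z ∈ closedDisk := show ‖z‖ ≤ 1 from le_of_eq hz1
    have hcc : starRingEnd ℂ z ∈ closedDisk := by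
      show ‖starRingEnd ℂ z‖ ≤ 1
      simp only [Complex.norm_conj]
      exact le_of_eq hz1
    have hE : fm (starRingEnd ℂ z) * fp z = gm (starRingEnd ℂ z) * gp z := by
      rw [← hf.factor z hz1, hg.factor z hz1]
    have hufp := (Matrix.isUnit_iff_isUnit_det _).mp (hf.unit_p z hzc)
    have hugm := (Matrix.isUnit_iff_isUnit_det _).mp (hg.unit_m _ hcc)
    show gp z * (fp z)⁻¹ = (gm (starRingEnd ℂ z))⁻¹ * fm (starRingEnd ℂ z)
    calc gp z * (fp z)⁻¹
        = (gm (starRingEnd ℂ z))⁻¹ * (gm (starRingEnd ℂ z) * gp z) * (fp z)⁻¹ := by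
          rw [← Matrix.mul_assoc, Matrix.nonsing_inv_mul _ hugm, Matrix.one_mul]
      _ = (gm (starRingEnd ℂ z))⁻¹ * (fm (starRingEnd ℂ z) * fp z) * (fp z)⁻¹ := by rw [hE]
      _ = (gm (starRingEnd ℂ z))⁻¹ * fm (starRingEnd ℂ z) := by
          rw [Matrix.mul_assoc, Matrix.mul_assoc, Matrix.mul_nonsing_inv _ hufp,
            Matrix.mul_one]
  have hbd' : ∀ z : ℂ, ‖z‖ = 1 → Ψ z = Φ (starRingEnd ℂ z) := by
    intro z hz1
    have h2 : ‖starRingEnd ℂ z‖ = 1 := by simp only [Complex.norm_conj]; exact hz1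
    have := hbd (starRingEnd ℂ z) h2
    rw [this, Complex.conj_conj]
  have hΦconst : ∀ z ∈ closedDisk, Φ z = Φ 0 := by
    intro z hz
    ext i j
    exact aux_reflect_const (hcd ▸ hΦc i j) (hod ▸ hΦd i j) (hcd ▸ hΨc i j) (hod ▸ hΨd i j)
      (fun u hu => by rw [hbd u hu]) z (hcd ▸ hz)
  have hΨconst : ∀ z ∈ closedDisk, Ψ z = Ψ 0 := by
    intro z hz
    ext i j
    exact aux_reflect_const (hcd ▸ hΨc i j) (hod ▸ hΨd i j) (hcd ▸ hΦc i j) (hod ▸ hΦd i j)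
      (fun u hu => by rw [hbd' u hu]) z (hcd ▸ hz)
  have h0c : (0:ℂ) ∈ closedDisk := by show ‖(0:ℂ)‖ ≤ 1; simp
  have h1c : (1:ℂ) ∈ closedDisk := by show ‖(1:ℂ)‖ ≤ 1; simp
  have hC : Φ 0 = Ψ 0 := by
    have e1 : Φ 1 = Φ 0 := hΦconst 1 h1c
    have e2 : Ψ 1 = Ψ 0 := hΨconst 1 h1c
    have e3 : Φ 1 = Ψ 1 := by
      have := hbd 1 (by simp)
      simpa using this
    rw [← e1, e3, e2]
  have hCunit : IsUnit (Φ 0) := by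
    rw [Matrix.isUnit_iff_isUnit_det, hΦdef]
    simp only [Matrix.det_mul]
    exact ((Matrix.isUnit_iff_isUnit_det _).mp (hg.unit_p 0 h0c)).mul
      (Matrix.isUnit_nonsing_inv_det _ ((Matrix.isUnit_iff_isUnit_det _).mp (hf.unit_p 0 h0c)))
  refine ⟨Φ 0, hCunit, fun z hz => ⟨?_, ?_⟩⟩
  · have hfz := (Matrix.isUnit_iff_isUnit_det _).mp (hf.unit_p z hz)
    have h := hΦconst z hz
    calc gp z = gp z * ((fp z)⁻¹ * fp z) := by
          rw [Matrix.nonsing_inv_mul _ hfz, Matrix.mul_one]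
      _ = (gp z * (fp z)⁻¹) * fp z := by rw [Matrix.mul_assoc]
      _ = Φ 0 * fp z := by
          show Φ z * fp z = Φ 0 * fp z
          rw [h]
  · have hgz := (Matrix.isUnit_iff_isUnit_det _).mp (hg.unit_m z hz)
    have h3 : Ψ z = Φ 0 := (hΨconst z hz).trans hC.symm
    have h4 : fm z = gm z * Φ 0 := by
      calc fm z = gm z * ((gm z)⁻¹ * fm z) := by
            rw [← Matrix.mul_assoc, Matrix.mul_nonsing_inv _ hgz, Matrix.one_mul]
        _ = gm z * Φ 0 := by
            show gm z * Ψ z = gm z * Φ 0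
            rw [h3]
    rw [h4, Matrix.mul_assoc,
      Matrix.mul_nonsing_inv _ ((Matrix.isUnit_iff_isUnit_det _).mp hCunit), Matrix.mul_one]
end

section
/- Let n ≥ 1 and let f : 𝕋 → M_n(ℂ). If (f₋, f₊) and (g₋, g₊) are two right canonical factorization data for f, then f₋(z̄) · f₊(z) = g₋(z̄) · g₊(z) for every z in the closed unit disk 𝔻̄. In other words, the interior extension f^e(z) = f₋(z̄) f₊(z) of f to 𝔻̄ is independent of the choice of right canonical factorization. -/
open Complex Matrix

lemma closedDisk_eq : closedDisk = Metric.closedBall (0:ℂ) 1 := by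
  ext z; simp [closedDisk, Metric.mem_closedBall, dist_zero_right]

lemma openDisk_eq : openDisk = Metric.ball (0:ℂ) 1 := by
  ext z; simp [openDisk, Metric.mem_ball, dist_zero_right]

lemma openDisk_subset_closedDisk : openDisk ⊆ closedDisk := fun z hz =>
  Set.mem_setOf.mpr (le_of_lt (Set.mem_setOf.mp hz))

lemma closure_openDisk : closure openDisk = closedDisk := by
  rw [openDisk_eq, closedDisk_eq, closure_ball (0:ℂ) one_ne_zero]

lemma isOpen_openDisk : IsOpen openDisk := by rw [openDisk_eq]; exact Metric.isOpen_ball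

lemma isClosed_closedDisk : IsClosed closedDisk := by
  rw [closedDisk_eq]; exact Metric.isClosed_closedBall

lemma frontier_openDisk : ∀ z ∈ frontier openDisk, ‖z‖ = 1 := by
  intro z hz
  rw [openDisk_eq, frontier_ball (0:ℂ) one_ne_zero] at hz
  simpa [dist_zero_right] using hz

lemma conj_mem_closedDisk {z : ℂ} (hz : z ∈ closedDisk) :
    (starRingEnd ℂ) z ∈ closedDisk := by
  simpa [closedDisk] using hz

lemma conj_mem_openDisk {z : ℂ} (hz : z ∈ openDisk) :
    (starRingEnd ℂ) z ∈ openDisk := by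
  simpa [openDisk] using hz

/-- Antiholomorphic composition: if `h` is holomorphic on a conj-stable set, so is
`z ↦ conj (h (conj z))`. -/
lemma differentiableOn_conj_comp_conj {h : ℂ → ℂ} {s : Set ℂ}
    (hs : ∀ z ∈ s, (starRingEnd ℂ) z ∈ s)
    (hd : DifferentiableOn ℂ h s) :
    DifferentiableOn ℂ (fun z => (starRingEnd ℂ) (h ((starRingEnd ℂ) z))) s := by
  intro x hx
  have hx' : (starRingEnd ℂ) x ∈ s := hs x hx
  have H := (hd _ hx').hasDerivWithinAt
  set d := derivWithin h s ((starRingEnd ℂ) x) with hdDef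
  refine (HasDerivWithinAt.differentiableWithinAt
    (f' := (starRingEnd ℂ) d) ?_)
  rw [hasDerivWithinAt_iff_tendsto_slope] at H ⊢
  have hmap : Filter.Tendsto (starRingEnd ℂ) (nhdsWithin x (s \ {x}))
      (nhdsWithin ((starRingEnd ℂ) x) (s \ {(starRingEnd ℂ) x})) := by
    apply ContinuousWithinAt.tendsto_nhdsWithin
    · exact (continuous_star.continuousWithinAt)
    · intro z hz
      refine ⟨hs z hz.1, fun hzz => hz.2 ?_⟩
      have : z = x := by
        have := congrArg (starRingEnd ℂ) hzz
        simpa using this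
      simp [this]
  have hconj : Filter.Tendsto (starRingEnd ℂ) (nhds d) (nhds ((starRingEnd ℂ) d)) :=
    (continuous_star.tendsto d)
  have hcomp := hconj.comp (H.comp hmap)
  convert hcomp using 1
  funext y
  simp only [Function.comp_apply, slope_def_field]
  rw [map_div₀, map_sub, map_sub, Complex.conj_conj, Complex.conj_conj]

/-- Determinant of a matrix of differentiable functions is differentiable. -/
lemma differentiableOn_det {m : ℕ} {M : ℂ → Matrix (Fin m) (Fin m) ℂ} {s : Set ℂ}
    (h : ∀ i j, DifferentiableOn ℂ (fun z => M z i j) s) :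
    DifferentiableOn ℂ (fun z => (M z).det) s := by
  have : (fun z => (M z).det)
      = fun z => ∑ σ : Equiv.Perm (Fin m),
          ((Equiv.Perm.sign σ : ℤ) : ℂ) * ∏ i, M z (σ i) i := by
    funext z
    rw [Matrix.det_apply]
    simp [Units.smul_def, zsmul_eq_mul]
  rw [this]
  exact DifferentiableOn.fun_sum fun σ _ =>
    (DifferentiableOn.fun_finsetProd (fun i _ => h (σ i) i)).const_mul _

lemma differentiableOn_adjugate {m : ℕ} {M : ℂ → Matrix (Fin m) (Fin m) ℂ} {s : Set ℂ}
    (h : ∀ i j, DifferentiableOn ℂ (fun z => M z i j) s) (i j : Fin m) :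
    DifferentiableOn ℂ (fun z => (M z).adjugate i j) s := by
  simp only [Matrix.adjugate_apply]
  apply differentiableOn_det
  intro a b
  simp only [Matrix.updateRow_apply]
  split_ifs
  · exact differentiableOn_const _
  · exact h a b

lemma matrix_inv_apply {m : ℕ} (A : Matrix (Fin m) (Fin m) ℂ) (i j : Fin m) :
    A⁻¹ i j = (A.det)⁻¹ * A.adjugate i j := by
  rw [Matrix.inv_def, Ring.inverse_eq_inv]
  simp [Matrix.smul_apply, smul_eq_mul]

/-- Constancy lemma: a function continuous on the closed disk, holomorphic inside and with
real boundary values is constant. -/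
lemma const_of_im_zero_on_circle {F : ℂ → ℂ}
    (hc : ContinuousOn F closedDisk) (hd : DifferentiableOn ℂ F openDisk)
    (hb : ∀ z : ℂ, ‖z‖ = 1 → (F z).im = 0) :
    ∀ z ∈ closedDisk, F z = F 0 := by
  have hball : Bornology.IsBounded openDisk := by
    rw [openDisk_eq]; exact Metric.isBounded_ball
  -- Step 1 : the imaginary part vanishes on the closed disk
  have hmax : ∀ c : ℂ, (∀ z : ℂ, ‖z‖ = 1 → (c * F z).re = 0) →
      ∀ z ∈ closedDisk, ‖Complex.exp (c * F z)‖ ≤ 1 := by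
    intro c hcirc z hz
    have hdc : DiffContOnCl ℂ (fun z => Complex.exp (c * F z)) openDisk := by
      constructor
      · exact ((hd.const_mul c).cexp)
      · rw [closure_openDisk]
        exact (hc.const_smul c).cexp
    refine Complex.norm_le_of_forall_mem_frontier_norm_le hball hdc ?_ ?_
    · intro w hw
      have h1 : ‖w‖ = 1 := frontier_openDisk w hw
      rw [Complex.norm_exp, hcirc w h1, Real.exp_zero]
    · rw [closure_openDisk]; exact hz
  have im0 : ∀ z ∈ closedDisk, (F z).im = 0 := by
    intro z hz
    have h1 := hmax I (fun w hw => by simp [Complex.mul_re, hb w hw]) z hz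
    have h2 := hmax (-I) (fun w hw => by simp [Complex.mul_re, hb w hw]) z hz
    rw [Complex.norm_exp] at h1 h2
    have e1 : (I * F z).re = -(F z).im := by simp [Complex.mul_re]
    have e2 : ((-I) * F z).re = (F z).im := by simp [Complex.mul_re]
    rw [e1] at h1
    rw [e2] at h2
    have := Real.exp_le_one_iff.mp h1
    have := Real.exp_le_one_iff.mp h2
    linarith [Real.exp_le_one_iff.mp h1, Real.exp_le_one_iff.mp h2]
  -- Step 2 : `exp (I * F)` is constant on the open disk
  set g : ℂ → ℂ := fun z => Complex.exp (I * F z) with hg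
  have zero_mem : (0:ℂ) ∈ openDisk := by simp [openDisk]
  have gnorm : ∀ z ∈ closedDisk, ‖g z‖ = 1 := by
    intro z hz
    rw [hg]
    simp only
    rw [Complex.norm_exp]
    have : (I * F z).re = -(F z).im := by simp [Complex.mul_re]
    rw [this, im0 z hz, neg_zero, Real.exp_zero]
  have hmaxOn : IsMaxOn (norm ∘ g) openDisk 0 := by
    intro z hz
    simp only [Set.mem_setOf_eq, Function.comp_apply]
    rw [gnorm z (openDisk_subset_closedDisk hz),
      gnorm 0 (openDisk_subset_closedDisk zero_mem)]
  have hpre : IsPreconnected openDisk := by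
    rw [openDisk_eq]; exact (convex_ball (0:ℂ) 1).isPreconnected
  have geq : Set.EqOn g (Function.const ℂ (g 0)) openDisk :=
    Complex.eqOn_of_isPreconnected_of_isMaxOn_norm hpre isOpen_openDisk
      ((hd.const_mul I).cexp) zero_mem hmaxOn
  -- Step 3 : hence `F z - F 0 ∈ 2πℤ` on the open disk
  have hint : ∀ z ∈ openDisk, ∃ nz : ℤ, F z = F 0 + nz * (2 * Real.pi) := by
    intro z hz
    have := geq hz
    simp only [Function.const_apply, hg] at this
    rw [Complex.exp_eq_exp_iff_exists_int] at this
    obtain ⟨nn, hnn⟩ := this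
    refine ⟨nn, ?_⟩
    have : I * F z = I * (F 0 + nn * (2 * Real.pi)) := by
      rw [hnn]; push_cast; ring
    exact mul_left_cancel₀ I_ne_zero this
  -- Step 4 : connectedness forces `F = F 0` on the open disk
  have hFopen : ∀ z ∈ openDisk, F z = F 0 := by
    by_contra hcon
    push_neg at hcon
    obtain ⟨z₀, hz₀, hne⟩ := hcon
    set S : Set ℂ := openDisk ∩ F ⁻¹' (Metric.ball (F 0) (2 * Real.pi)) with hS
    set T : Set ℂ := openDisk ∩ F ⁻¹' ({F 0}ᶜ) with hT
    have hcF : ContinuousOn F openDisk := hc.mono openDisk_subset_closedDisk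
    have hSopen : IsOpen S := hcF.isOpen_inter_preimage isOpen_openDisk Metric.isOpen_ball
    have hTopen : IsOpen T := hcF.isOpen_inter_preimage isOpen_openDisk
      (isClosed_singleton.isOpen_compl)
    have hcover : openDisk ⊆ S ∪ T := by
      intro z hz
      by_cases hzF : F z = F 0
      · left
        exact ⟨hz, by simp [hzF, Real.pi_pos]⟩
      · right; exact ⟨hz, hzF⟩
    have hSne : (openDisk ∩ S).Nonempty :=
      ⟨0, zero_mem, zero_mem, by simp [Real.pi_pos]⟩
    have hTne : (openDisk ∩ T).Nonempty := ⟨z₀, hz₀, hz₀, hne⟩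
    obtain ⟨w, hw, hwS, hwT⟩ := hpre S T hSopen hTopen hcover hSne hTne
    obtain ⟨nw, hnw⟩ := hint w hw
    have hwball : dist (F w) (F 0) < 2 * Real.pi := hwS.2
    have hwne : F w ≠ F 0 := hwT.2
    have hn0 : nw ≠ 0 := by
      intro h0; rw [h0] at hnw; simp at hnw; exact hwne hnw
    have : dist (F w) (F 0) = |(nw : ℝ)| * (2 * Real.pi) := by
      rw [dist_eq_norm, hnw]
      have : F 0 + (nw : ℂ) * (2 * Real.pi) - F 0 = ((nw * (2 * Real.pi) : ℝ) : ℂ) := by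
        push_cast; ring
      rw [this, Complex.norm_real, Real.norm_eq_abs, abs_mul]
      congr 1
      rw [abs_of_pos]; positivity
    rw [this] at hwball
    have : (1:ℝ) ≤ |(nw : ℝ)| := by
      rw [← Int.cast_abs]
      exact_mod_cast Int.one_le_abs hn0
    nlinarith [Real.pi_pos]
  -- Step 5 : extend to the closed disk by continuity
  have hclosed : IsClosed (closedDisk ∩ F ⁻¹' {F 0}) :=
    hc.preimage_isClosed_of_isClosed isClosed_closedDisk isClosed_singleton
  intro z hz
  have hz' : z ∈ closure openDisk := by rw [closure_openDisk]; exact hz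
  have hsub : openDisk ⊆ closedDisk ∩ F ⁻¹' {F 0} := fun w hw =>
    ⟨openDisk_subset_closedDisk hw, hFopen w hw⟩
  exact (closure_minimal hsub hclosed hz').2

/-- Two-function constancy lemma: if `k`, `h` are disk-holomorphic and `h (conj z) = k z` on
the circle, then both are the same constant. -/
lemma eq_const_of_conj_boundary_match {k h : ℂ → ℂ}
    (hkc : ContinuousOn k closedDisk) (hkd : DifferentiableOn ℂ k openDisk)
    (hhc : ContinuousOn h closedDisk) (hhd : DifferentiableOn ℂ h openDisk)
    (hb : ∀ z : ℂ, ‖z‖ = 1 → h ((starRingEnd ℂ) z) = k z) :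
    ∀ z ∈ closedDisk, ∀ w ∈ closedDisk, k z = h w := by
  set q : ℂ → ℂ := fun z => (starRingEnd ℂ) (h ((starRingEnd ℂ) z)) with hq
  have hqc : ContinuousOn q closedDisk := by
    apply ContinuousOn.star
    exact hhc.comp continuous_star.continuousOn (fun z hz => conj_mem_closedDisk hz)
  have hqd : DifferentiableOn ℂ q openDisk :=
    differentiableOn_conj_comp_conj (fun z hz => conj_mem_openDisk hz) hhd
  have hqb : ∀ z : ℂ, ‖z‖ = 1 → q z = (starRingEnd ℂ) (k z) := by
    intro z hz
    rw [hq]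
    simp only
    rw [hb z hz]
  -- F := k + q is real on the circle
  have hF := const_of_im_zero_on_circle (F := fun z => k z + q z)
    (hkc.add hqc) (hkd.add hqd) (by
      intro z hz
      show (k z + q z).im = 0
      rw [hqb z hz]
      simp [Complex.add_im])
  -- G := I * (k - q) is real on the circle
  have hG := const_of_im_zero_on_circle (F := fun z => I * (k z - q z))
    ((hkc.sub hqc).const_smul I) ((hkd.sub hqd).const_mul I) (by
      intro z hz
      show (I * (k z - q z)).im = 0
      rw [hqb z hz]
      simp [Complex.mul_im, Complex.sub_re])
  have hone : (1:ℂ) ∈ closedDisk := by simp [closedDisk]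
  have hnorm1 : ‖(1:ℂ)‖ = 1 := norm_one
  -- k and q are constant
  have hF' : ∀ z ∈ closedDisk, k z + q z = k 0 + q 0 := fun z hz => hF z hz
  have hG' : ∀ z ∈ closedDisk, I * (k z - q z) = I * (k 0 - q 0) := fun z hz => hG z hz
  have hkconst : ∀ z ∈ closedDisk, k z = k 1 := by
    intro z hz
    have e1 : ∀ x, k x = ((k x + q x) + (-I) * (I * (k x - q x))) / 2 := by
      intro x; field_simp; rw [Complex.I_sq]; ring
    rw [e1 z, e1 1, hF' z hz, hG' z hz, hF' 1 hone, hG' 1 hone]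
  have hqconst : ∀ z ∈ closedDisk, q z = q 1 := by
    intro z hz
    have e1 : ∀ x, q x = ((k x + q x) - (-I) * (I * (k x - q x))) / 2 := by
      intro x; field_simp; rw [Complex.I_sq]; ring
    rw [e1 z, e1 1, hF' z hz, hG' z hz, hF' 1 hone, hG' 1 hone]
  intro z hz w hw
  have hk1 : k 1 = h 1 := by
    have := hb 1 hnorm1
    simpa using this.symm
  have hhw : h w = h 1 := by
    have hcw : (starRingEnd ℂ) w ∈ closedDisk := conj_mem_closedDisk hw
    have := hqconst _ hcw
    rw [hq] at this
    simp only at this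
    have hww : (starRingEnd ℂ) ((starRingEnd ℂ) w) = w := by simp
    rw [hww] at this
    have h1 : (starRingEnd ℂ) (h ((starRingEnd ℂ) 1)) = (starRingEnd ℂ) (h 1) := by
      norm_num
    rw [h1] at this
    have := congrArg (starRingEnd ℂ) this
    simpa using this
  rw [hkconst z hz, hhw, hk1]

/-- The interior extension `f^e(z) = f₋(z̄) f₊(z)` is independent of the choice of right
canonical factorization. -/
theorem interior_extension_independent_of_right_factorization
    {n : ℕ} (hn : 1 ≤ n) (f fm fp gm gp : ℂ → Matrix (Fin n) (Fin n) ℂ)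
    (hf : RightCanonicalFactorizationDatum n f fm fp)
    (hg : RightCanonicalFactorizationDatum n f gm gp) :
    ∀ z ∈ closedDisk,
      fm (starRingEnd ℂ z) * fp z = gm (starRingEnd ℂ z) * gp z := by
  -- the two "quotient" functions
  set K : ℂ → Matrix (Fin n) (Fin n) ℂ := fun z => gp z * (fp z)⁻¹ with hK
  set H : ℂ → Matrix (Fin n) (Fin n) ℂ := fun w => (gm w)⁻¹ * fm w with hH
  -- determinants are nonzero on the closed disk
  have hfp_det : ∀ z ∈ closedDisk, (fp z).det ≠ 0 := fun z hz =>
    (Matrix.isUnit_iff_isUnit_det _ |>.mp (hf.unit_p z hz)).ne_zero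
  have hgm_det : ∀ z ∈ closedDisk, (gm z).det ≠ 0 := fun z hz =>
    (Matrix.isUnit_iff_isUnit_det _ |>.mp (hg.unit_m z hz)).ne_zero
  -- entrywise continuity of a matrix-valued continuous function
  have entry_cont : ∀ (M : ℂ → Matrix (Fin n) (Fin n) ℂ), ContinuousOn M closedDisk →
      ∀ i j, ContinuousOn (fun z => M z i j) closedDisk := by
    intro M hM i j
    exact ((continuous_apply j).comp (continuous_apply i)).comp_continuousOn hM
  -- continuity & differentiability of inverse entries
  have inv_cont : ∀ (M : ℂ → Matrix (Fin n) (Fin n) ℂ), ContinuousOn M closedDisk →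
      (∀ z ∈ closedDisk, (M z).det ≠ 0) →
      ∀ i j, ContinuousOn (fun z => (M z)⁻¹ i j) closedDisk := by
    intro M hM hdet i j
    have : (fun z => (M z)⁻¹ i j)
        = fun z => ((M z).det)⁻¹ * (M z).adjugate i j := by
      funext z; exact matrix_inv_apply (M z) i j
    rw [this]
    apply ContinuousOn.mul
    · exact ((Continuous.matrix_det continuous_id).comp_continuousOn hM).inv₀ hdet
    · exact (((continuous_apply j).comp (continuous_apply i)).comp
        (Continuous.matrix_adjugate continuous_id)).comp_continuousOn hM
  have inv_diff : ∀ (M : ℂ → Matrix (Fin n) (Fin n) ℂ),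
      (∀ i j, DifferentiableOn ℂ (fun z => M z i j) openDisk) →
      (∀ z ∈ closedDisk, (M z).det ≠ 0) →
      ∀ i j, DifferentiableOn ℂ (fun z => (M z)⁻¹ i j) openDisk := by
    intro M hM hdet i j
    have : (fun z => (M z)⁻¹ i j)
        = fun z => ((M z).det)⁻¹ * (M z).adjugate i j := by
      funext z; exact matrix_inv_apply (M z) i j
    rw [this]
    apply DifferentiableOn.mul
    · exact (differentiableOn_det hM).inv
        (fun z hz => hdet z (openDisk_subset_closedDisk hz))
    · exact differentiableOn_adjugate hM i j
  -- K and H entries are continuous / differentiable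
  have hKc : ∀ i j, ContinuousOn (fun z => K z i j) closedDisk := by
    intro i j
    have : (fun z => K z i j) = fun z => ∑ l, gp z i l * (fp z)⁻¹ l j := by
      funext z; rw [hK]; simp [Matrix.mul_apply]
    rw [this]
    exact continuousOn_finset_sum Finset.univ fun l _ =>
      (entry_cont gp hg.cont_p i l).mul (inv_cont fp hf.cont_p hfp_det l j)
  have hKd : ∀ i j, DifferentiableOn ℂ (fun z => K z i j) openDisk := by
    intro i j
    have : (fun z => K z i j) = fun z => ∑ l, gp z i l * (fp z)⁻¹ l j := by
      funext z; rw [hK]; simp [Matrix.mul_apply]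
    rw [this]
    exact DifferentiableOn.fun_sum fun l _ =>
      (hg.hol_p i l).mul (inv_diff fp hf.hol_p hfp_det l j)
  have hHc : ∀ i j, ContinuousOn (fun z => H z i j) closedDisk := by
    intro i j
    have : (fun z => H z i j) = fun z => ∑ l, (gm z)⁻¹ i l * fm z l j := by
      funext z; rw [hH]; simp [Matrix.mul_apply]
    rw [this]
    exact continuousOn_finset_sum Finset.univ fun l _ =>
      (inv_cont gm hg.cont_m hgm_det i l).mul (entry_cont fm hf.cont_m l j)
  have hHd : ∀ i j, DifferentiableOn ℂ (fun z => H z i j) openDisk := by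
    intro i j
    have : (fun z => H z i j) = fun z => ∑ l, (gm z)⁻¹ i l * fm z l j := by
      funext z; rw [hH]; simp [Matrix.mul_apply]
    rw [this]
    exact DifferentiableOn.fun_sum fun l _ =>
      (inv_diff gm hg.hol_m hgm_det i l).mul (hf.hol_m l j)
  -- boundary matching : H (conj z) = K z on the circle
  have hbdry : ∀ z : ℂ, ‖z‖ = 1 → H ((starRingEnd ℂ) z) = K z := by
    intro z hz
    have hzc : z ∈ closedDisk := le_of_eq hz
    have hzcc : (starRingEnd ℂ) z ∈ closedDisk := conj_mem_closedDisk hzc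
    have heq : fm ((starRingEnd ℂ) z) * fp z = gm ((starRingEnd ℂ) z) * gp z := by
      rw [← hf.factor z hz, hg.factor z hz]
    have hfp : IsUnit (fp z).det := Matrix.isUnit_iff_isUnit_det _ |>.mp (hf.unit_p z hzc)
    have hgm : IsUnit (gm ((starRingEnd ℂ) z)).det :=
      Matrix.isUnit_iff_isUnit_det _ |>.mp (hg.unit_m _ hzcc)
    rw [hH, hK]
    simp only
    -- (gm z̄)⁻¹ * fm z̄ = gp z * (fp z)⁻¹
    have h1 : fm ((starRingEnd ℂ) z) = gm ((starRingEnd ℂ) z) * gp z * (fp z)⁻¹ := by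
      have := congrArg (fun M => M * (fp z)⁻¹) heq
      simpa [Matrix.mul_assoc, Matrix.mul_nonsing_inv _ hfp, Matrix.mul_one] using this
    rw [h1, ← Matrix.mul_assoc, ← Matrix.mul_assoc,
      Matrix.nonsing_inv_mul _ hgm, Matrix.one_mul]
  -- apply the scalar constancy lemma entrywise
  have hmain : ∀ z ∈ closedDisk, ∀ w ∈ closedDisk, K z = H w := by
    intro z hz w hw
    ext i j
    exact (eq_const_of_conj_boundary_match (hKc i j) (hKd i j) (hHc i j) (hHd i j)
      (fun u hu => by rw [hbdry u hu]) z hz w hw)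
  -- conclude
  intro z hz
  have hzc : (starRingEnd ℂ) z ∈ closedDisk := conj_mem_closedDisk hz
  have hKH : K z = H ((starRingEnd ℂ) z) := hmain z hz _ hzc
  have hfp : IsUnit (fp z).det := Matrix.isUnit_iff_isUnit_det _ |>.mp (hf.unit_p z hz)
  have hgm : IsUnit (gm ((starRingEnd ℂ) z)).det :=
    Matrix.isUnit_iff_isUnit_det _ |>.mp (hg.unit_m _ hzc)
  have h2 : gm ((starRingEnd ℂ) z) * K z * fp z
      = gm ((starRingEnd ℂ) z) * H ((starRingEnd ℂ) z) * fp z := by rw [hKH]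
  rw [hK, hH] at h2
  simp only at h2
  calc fm ((starRingEnd ℂ) z) * fp z
      = gm ((starRingEnd ℂ) z) * ((gm ((starRingEnd ℂ) z))⁻¹ * fm ((starRingEnd ℂ) z)) * fp z := by
        rw [← Matrix.mul_assoc, Matrix.mul_nonsing_inv _ hgm, Matrix.one_mul]
    _ = gm ((starRingEnd ℂ) z) * (gp z * (fp z)⁻¹) * fp z := by rw [← h2]
    _ = gm ((starRingEnd ℂ) z) * gp z := by
        rw [Matrix.mul_assoc, Matrix.mul_assoc, Matrix.nonsing_inv_mul _ hfp, Matrix.mul_one]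
end

section
/- Define 3×3 complex matrix-valued functions by h(z,w) = [[zw + w, z − 1/2, 0], [z − 1/2, z w⁻¹ + (1/2) w⁻¹, 1], [0, 1, z⁻¹]], h⁻(z,w) = [[1, 0, 0], [(1+2z)/((−1+2z)w), 1, 0], [0, 0, 1]], and h⁺(z,w) = [[(1+z)w, −1/2 + z, 0], [(1+10z)/(2−4z), 0, 1], [0, 1, z⁻¹]]. Then for all z, w ∈ ℂ with z ≠ 0, w ≠ 0 and z ≠ 1/2, one has the matrix identity h(z,w) = h⁻(z,w) · h⁺(z,w). -/
open Complex Matrix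

/-- The off-diagonal block of the two-dimensional model Hamiltonian of Section 5.1. -/
noncomputable def hSymbol (z w : ℂ) : Matrix (Fin 3) (Fin 3) ℂ :=
  !![z * w + w, z - 1/2, 0;
     z - 1/2, z * w⁻¹ + (1/2) * w⁻¹, 1;
     0, 1, z⁻¹]

/-- The left factor `h⁻` of the Wiener–Hopf factorization in the `w`-variable. -/
noncomputable def hWHminus (z w : ℂ) : Matrix (Fin 3) (Fin 3) ℂ :=
  !![1, 0, 0;
     (1 + 2 * z) / ((-1 + 2 * z) * w), 1, 0;
     0, 0, 1]

/-- The right factor `h⁺` of the Wiener–Hopf factorization in the `w`-variable. -/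
noncomputable def hWHplus (z w : ℂ) : Matrix (Fin 3) (Fin 3) ℂ :=
  !![(1 + z) * w, -1/2 + z, 0;
     (1 + 10 * z) / (2 - 4 * z), 0, 1;
     0, 1, z⁻¹]

/-- The explicit Wiener–Hopf factorization `h = h⁻ h⁺` in the `w`-variable. -/
theorem hSymbol_eq_hWHminus_mul_hWHplus :
    ∀ z w : ℂ, z ≠ 0 → w ≠ 0 → z ≠ 1/2 →
      hSymbol z w = hWHminus z w * hWHplus z w := by
  intro z w hz hw hz2
  have h1 : (-1 : ℂ) + 2 * z ≠ 0 := by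
    intro h; apply hz2; linear_combination (h : _) / 2
  have h2 : (2 : ℂ) - 4 * z ≠ 0 := by
    intro h; apply hz2; linear_combination -(h : _) / 4
  unfold hSymbol hWHminus hWHplus
  ext i j
  fin_cases i <;> fin_cases j <;>
    simp only [Matrix.mul_apply, Fin.sum_univ_three, Matrix.cons_val', Matrix.cons_val_zero,
      Matrix.cons_val_one, Matrix.head_cons, Matrix.empty_val', Matrix.cons_val_fin_one,
      Matrix.head_fin_const, Matrix.cons_val_two, Matrix.tail_cons, Matrix.of_apply, Fin.zero_eta,
        Fin.mk_one, Fin.reduceFinMk, Fin.isValue] <;>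
    field_simp [show (-1 : ℂ) + z * 2 ≠ 0 by rwa [mul_comm], show (2 : ℂ) - z * 4 ≠ 0 by rwa [mul_comm]] <;> ring
end

section
/- Let h(z,w) = [[zw + w, z − 1/2, 0], [z − 1/2, z w⁻¹ + (1/2) w⁻¹, 1], [0, 1, z⁻¹]], and set H(z,w) = [[0, h(z,w)*], [h(z,w), 0]] ∈ M_6(ℂ) in 3×3 block form (where * denotes conjugate transpose), Π = [[1₃, 0], [0, −1₃]] and I = [[0, 1₃], [1₃, 0]]. Then for all z, w ∈ ℂ with z ≠ 0 and w ≠ 0: (i) h(z,w)* = h(z̄, w̄), where z̄ denotes complex conjugation; (ii) H(z,w) is Hermitian; (iii) Π H(z,w) Π = −H(z,w) (chiral symmetry); and (iv) I H(z,w) I = H(z̄, w̄); in particular, for z, w on the unit circle, I H(z,w) I = H(z⁻¹, w⁻¹) (inversion symmetry). Moreover Π and I are Hermitian unitary and Π I = −I Π. -/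
open Complex Matrix

/-- The two-dimensional model Hamiltonian `H(z,w) = [[0, h*],[h, 0]]`. -/
noncomputable def HSymbol (z w : ℂ) : Matrix (Fin 3 ⊕ Fin 3) (Fin 3 ⊕ Fin 3) ℂ :=
  Matrix.fromBlocks 0 (hSymbol z w)ᴴ (hSymbol z w) 0

/-- The chiral symmetry operator `Π = [[1₃, 0], [0, −1₃]]`. -/
noncomputable def chiralOp : Matrix (Fin 3 ⊕ Fin 3) (Fin 3 ⊕ Fin 3) ℂ :=
  Matrix.fromBlocks 1 0 0 (-1)

/-- The inversion symmetry operator `I = [[0, 1₃], [1₃, 0]]`. -/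
noncomputable def inversionOp : Matrix (Fin 3 ⊕ Fin 3) (Fin 3 ⊕ Fin 3) ℂ :=
  Matrix.fromBlocks 0 1 1 0

lemma hSymbol_conjTranspose (z w : ℂ) :
    (hSymbol z w)ᴴ = hSymbol (starRingEnd ℂ z) (starRingEnd ℂ w) := by
  ext i j
  fin_cases i <;> fin_cases j <;>
    simp [hSymbol, conjTranspose_apply, map_add, _root_.map_mul, map_sub, map_inv₀, map_div₀]

/-- The model Hamiltonian of Section 5.1 is Hermitian and preserves the chiral symmetry `Π`
and the inversion symmetry `I`, with `Π` and `I` Hermitian unitary and anticommuting. -/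
theorem HSymbol_symmetries :
    (∀ z w : ℂ, z ≠ 0 → w ≠ 0 →
      (hSymbol z w)ᴴ = hSymbol (starRingEnd ℂ z) (starRingEnd ℂ w)) ∧
    (∀ z w : ℂ, z ≠ 0 → w ≠ 0 → (HSymbol z w).IsHermitian) ∧
    (∀ z w : ℂ, z ≠ 0 → w ≠ 0 →
      chiralOp * HSymbol z w * chiralOp = -(HSymbol z w)) ∧
    (∀ z w : ℂ, z ≠ 0 → w ≠ 0 →
      inversionOp * HSymbol z w * inversionOp =
        HSymbol (starRingEnd ℂ z) (starRingEnd ℂ w)) ∧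
    (∀ z w : ℂ, ‖z‖ = 1 → ‖w‖ = 1 →
      inversionOp * HSymbol z w * inversionOp = HSymbol z⁻¹ w⁻¹) ∧
    chiralOp.IsHermitian ∧ chiralOp * chiralOp = 1 ∧
    inversionOp.IsHermitian ∧ inversionOp * inversionOp = 1 ∧
    chiralOp * inversionOp = -(inversionOp * chiralOp) := by
  have hc := hSymbol_conjTranspose
  have key : ∀ z w : ℂ, HSymbol (starRingEnd ℂ z) (starRingEnd ℂ w) =
      fromBlocks 0 (hSymbol z w) (hSymbol z w)ᴴ 0 := fun z w => by
    rw [HSymbol, ← hc z w, conjTranspose_conjTranspose]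
  refine ⟨fun z w _ _ => hc z w, ?_, ?_, ?_, ?_, ?_, ?_, ?_, ?_, ?_⟩
  · intro z w _ _
    simp [HSymbol, Matrix.IsHermitian, Matrix.fromBlocks_conjTranspose]
  · intro z w _ _
    simp [HSymbol, chiralOp, fromBlocks_multiply, Matrix.fromBlocks_neg]
  · intro z w _ _
    rw [key z w]
    simp [HSymbol, inversionOp, fromBlocks_multiply]
  · intro z w hz hw
    have hz0 : z ≠ 0 := by intro h; simp [h] at hz
    have hw0 : w ≠ 0 := by intro h; simp [h] at hw
    have hzc : starRingEnd ℂ z = z⁻¹ := (Complex.inv_eq_conj hz).symm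
    have hwc : starRingEnd ℂ w = w⁻¹ := (Complex.inv_eq_conj hw).symm
    rw [← hzc, ← hwc, key z w]
    simp [HSymbol, inversionOp, fromBlocks_multiply]
  · simp [chiralOp, Matrix.IsHermitian, Matrix.fromBlocks_conjTranspose]
  · simp [chiralOp, fromBlocks_multiply, ← Matrix.fromBlocks_one]
  · simp [inversionOp, Matrix.IsHermitian, Matrix.fromBlocks_conjTranspose]
  · simp [inversionOp, fromBlocks_multiply, ← Matrix.fromBlocks_one]
  · simp [chiralOp, inversionOp, fromBlocks_multiply, Matrix.fromBlocks_neg]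
end

section
/- Let N ≥ 1, let H : 𝕋² → M_N(ℂ) be a continuous map, and let Π, I ∈ M_N(ℂ) be Hermitian unitary matrices with Π I = −I Π, such that I H(z,w) I = H(z̄, w̄) and Π H(z,w) Π = −H(z,w) for all (z,w) ∈ 𝕋². Define H' on 𝕋² × ℝ by H'(z,w,θ) = H(z,w) cos θ − Π sin θ when cos θ ≥ 0, and H'(z,w,θ) = I cos θ − Π sin θ when cos θ ≤ 0. Then: (i) H' is well defined (when cos θ = 0 the two formulas both equal −Π sin θ) and is continuous and 2π-periodic in θ; and (ii) H' satisfies the inversion symmetry I H'(z,w,θ) I = H'(z̄, w̄, −θ) for all (z,w) ∈ 𝕋² and all θ ∈ ℝ. -/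
open Complex Matrix

/-- The suspended Hamiltonian `H'(z,w,θ)` of the three-dimensional example (Section 5.2):
`H(z,w) cos θ − P sin θ` when `cos θ ≥ 0`, and `I cos θ − P sin θ` when `cos θ ≤ 0`. -/
noncomputable def suspend {N : ℕ} (H : ℂ → ℂ → Matrix (Fin N) (Fin N) ℂ)
    (P Iop : Matrix (Fin N) (Fin N) ℂ) (z w : ℂ) (θ : ℝ) : Matrix (Fin N) (Fin N) ℂ :=
  if 0 ≤ Real.cos θ then (Real.cos θ : ℂ) • H z w - (Real.sin θ : ℂ) • P
  else (Real.cos θ : ℂ) • Iop - (Real.sin θ : ℂ) • P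

/-- The suspension `H'` of a two-dimensional inversion- and chiral-symmetric Hamiltonian is
well defined (the two branches agree when `cos θ = 0`), continuous and `2π`-periodic in `θ`,
and satisfies the inversion symmetry `I H'(z,w,θ) I = H'(z̄,w̄,−θ)`. -/
theorem suspend_welldefined_continuous_periodic_inversion
    {N : ℕ} (hN : 1 ≤ N) (H : ℂ → ℂ → Matrix (Fin N) (Fin N) ℂ)
    (hHcont : ContinuousOn (fun p : ℂ × ℂ => H p.1 p.2)
      {p : ℂ × ℂ | ‖p.1‖ = 1 ∧ ‖p.2‖ = 1})
    (P Iop : Matrix (Fin N) (Fin N) ℂ)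
    (hP : P.IsHermitian) (hP2 : P * P = 1)
    (hI : Iop.IsHermitian) (hI2 : Iop * Iop = 1)
    (hPI : P * Iop = -(Iop * P))
    (hinv : ∀ z w : ℂ, ‖z‖ = 1 → ‖w‖ = 1 →
      Iop * H z w * Iop = H (starRingEnd ℂ z) (starRingEnd ℂ w))
    (hchiral : ∀ z w : ℂ, ‖z‖ = 1 → ‖w‖ = 1 → P * H z w * P = -(H z w)) :
    (∀ z w : ℂ, ∀ θ : ℝ, Real.cos θ = 0 →
      (Real.cos θ : ℂ) • H z w - (Real.sin θ : ℂ) • P =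
        (Real.cos θ : ℂ) • Iop - (Real.sin θ : ℂ) • P) ∧
    (∀ z w : ℂ, Continuous fun θ : ℝ => suspend H P Iop z w θ) ∧
    (∀ z w : ℂ, ∀ θ : ℝ,
      suspend H P Iop z w (θ + 2 * Real.pi) = suspend H P Iop z w θ) ∧
    (∀ z w : ℂ, ∀ θ : ℝ, ‖z‖ = 1 → ‖w‖ = 1 →
      Iop * suspend H P Iop z w θ * Iop =
        suspend H P Iop (starRingEnd ℂ z) (starRingEnd ℂ w) (-θ)) := by
  have hIPI : Iop * P * Iop = -P := by
    have h1 : Iop * (P * Iop) = Iop * -(Iop * P) := by rw [hPI]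
    calc Iop * P * Iop = Iop * (P * Iop) := by rw [mul_assoc]
      _ = -(Iop * Iop * P) := by rw [h1, mul_neg, mul_assoc]
      _ = -P := by rw [hI2, one_mul]
  refine ⟨?_, ?_, ?_, ?_⟩
  · intro z w θ hθ
    simp [hθ]
  · intro z w
    unfold suspend
    apply Continuous.if_le
    · exact ((Complex.continuous_ofReal.comp Real.continuous_cos).smul
        continuous_const).sub
        ((Complex.continuous_ofReal.comp Real.continuous_sin).smul continuous_const)
    · exact ((Complex.continuous_ofReal.comp Real.continuous_cos).smul
        continuous_const).sub
        ((Complex.continuous_ofReal.comp Real.continuous_sin).smul continuous_const)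
    · exact continuous_const
    · exact Real.continuous_cos
    · intro θ hθ
      simp [← hθ]
  · intro z w θ
    unfold suspend
    rw [Real.cos_add_two_pi, Real.sin_add_two_pi]
  · intro z w θ hz hw
    unfold suspend
    rcases le_or_gt 0 (Real.cos θ) with h | h
    · rw [if_pos h, if_pos (by rwa [Real.cos_neg])]
      rw [Real.cos_neg, Real.sin_neg, Complex.ofReal_neg, neg_smul, sub_neg_eq_add,
        mul_sub, sub_mul, mul_smul_comm, mul_smul_comm, smul_mul_assoc,
        smul_mul_assoc, hinv z w hz hw, hIPI, smul_neg, sub_neg_eq_add]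
    · rw [if_neg (not_le.mpr h), if_neg (by rw [Real.cos_neg]; exact not_le.mpr h)]
      rw [Real.cos_neg, Real.sin_neg, Complex.ofReal_neg, neg_smul, sub_neg_eq_add,
        mul_sub, sub_mul, mul_smul_comm, mul_smul_comm, smul_mul_assoc,
        smul_mul_assoc, hIPI, smul_neg, sub_neg_eq_add, mul_assoc, hI2, mul_one]
end
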